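/- The set of critical points of F in ℂˣ × ℂˣ is exactly {(φ, φ), (ψ, ψ), (−1, −1)}, where φ = (1 + √5)/2 and ψ = (1 − √5)/2; here a critical point is a point at which both partial derivatives ∂F/∂u and ∂F/∂v vanish. -/

import Mathlib

open Complex

/-- The Pascaleff–Tonkonog potential function of the monotone Lagrangian torus in the
monotone blow-up of `ℂP²` at four points (Novikov parameter `T` normalized to `1`). -/
noncomputable def PTpotential (u v : ℂ) : ℂ :=
  (1 + u + v) * (1 + u⁻¹) * (1 + v⁻¹) - 3

/-- The golden ratio `(1 + √5)/2` as a complex number. -/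
noncomputable def goldenφ : ℂ := (1 + (Real.sqrt 5 : ℂ)) / 2

/-- The conjugate golden ratio `(1 - √5)/2` as a complex number. -/
noncomputable def goldenψ : ℂ := (1 - (Real.sqrt 5 : ℂ)) / 2

lemma sqrt5_sq : ((Real.sqrt 5 : ℂ))^2 = 5 := by
  rw [← Complex.ofReal_pow, Real.sq_sqrt (by norm_num : (5:ℝ) ≥ 0)]
  norm_num

lemma golden_fac (u : ℂ) : u^2 - u - 1 = (u - goldenφ) * (u - goldenψ) := by
  unfold goldenφ goldenψ
  linear_combination (1/4 : ℂ) * sqrt5_sq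

lemma phi_sq : goldenφ^2 = goldenφ + 1 := by
  have := golden_fac goldenφ; simp at this; linear_combination this

lemma psi_sq : goldenψ^2 = goldenψ + 1 := by
  have := golden_fac goldenψ; simp at this; linear_combination this

lemma phi_ne : goldenφ ≠ 0 := by
  unfold goldenφ
  intro h
  have : (Real.sqrt 5 : ℂ) = -1 := by linear_combination 2*h
  have h2 : ((Real.sqrt 5 : ℂ))^2 = 1 := by rw [this]; ring
  rw [sqrt5_sq] at h2; norm_num at h2

lemma psi_ne : goldenψ ≠ 0 := by
  unfold goldenψ
  intro h
  have : (Real.sqrt 5 : ℂ) = 1 := by linear_combination -2*h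
  have h2 : ((Real.sqrt 5 : ℂ))^2 = 1 := by rw [this]; ring
  rw [sqrt5_sq] at h2; norm_num at h2

lemma deriv_slice (u v : ℂ) (hu : u ≠ 0) :
    deriv (fun x => PTpotential x v) u
      = (1 * (1 + u⁻¹) + (1 + u + v) * (-(u^2)⁻¹)) * (1 + v⁻¹) := by
  have h1 : HasDerivAt (fun x : ℂ => 1 + x + v) 1 u := by
    simpa using ((hasDerivAt_id u).const_add 1).add_const v
  have h2 : HasDerivAt (fun x : ℂ => 1 + x⁻¹) (-(u^2)⁻¹) u :=
    (hasDerivAt_inv hu).const_add 1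
  have h : HasDerivAt (fun x : ℂ => PTpotential x v)
      ((1 * (1 + u⁻¹) + (1 + u + v) * (-(u^2)⁻¹)) * (1 + v⁻¹)) u := by
    unfold PTpotential
    exact ((h1.mul h2).mul_const (1 + v⁻¹)).sub_const 3
  exact h.deriv

lemma pt_symm (u v : ℂ) : PTpotential u v = PTpotential v u := by
  unfold PTpotential; ring

/-- The set of critical points of `F(u,v) = (1+u+v)(1+u⁻¹)(1+v⁻¹) - 3` in `ℂˣ × ℂˣ`
is exactly `{(φ, φ), (ψ, ψ), (-1, -1)}`, where `φ = (1+√5)/2` and `ψ = (1-√5)/2`. -/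
theorem critical_points_of_PTpotential :
    ∀ u v : ℂ, u ≠ 0 → v ≠ 0 →
      ((deriv (fun x => PTpotential x v) u = 0 ∧ deriv (fun y => PTpotential u y) v = 0) ↔
        (u, v) ∈ ({(goldenφ, goldenφ), (goldenψ, goldenψ), (-1, -1)} : Set (ℂ × ℂ))) := by
  intro u v hu hv
  have hdu : deriv (fun x => PTpotential x v) u
      = (1 * (1 + u⁻¹) + (1 + u + v) * (-(u^2)⁻¹)) * (1 + v⁻¹) := deriv_slice u v hu
  have hdv : deriv (fun y => PTpotential u y) v
      = (1 * (1 + v⁻¹) + (1 + v + u) * (-(v^2)⁻¹)) * (1 + u⁻¹) := by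
    have : (fun y => PTpotential u y) = (fun y => PTpotential y u) := by
      funext y; exact pt_symm u y
    rw [this]; exact deriv_slice v u hv
  rw [hdu, hdv]
  constructor
  · rintro ⟨c1, c2⟩
    have e1 : (v + 1) * (u^2 - 1 - v) = 0 := by
      field_simp at c1
      have h : u * ((v + 1) * (u^2 - 1 - v)) = 0 := by linear_combination u * c1
      rcases mul_eq_zero.mp h with h | h
      · exact absurd h hu
      · exact h
    have e2 : (u + 1) * (v^2 - 1 - u) = 0 := by
      field_simp at c2
      have h : v * ((u + 1) * (v^2 - 1 - u)) = 0 := by linear_combination v * c2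
      rcases mul_eq_zero.mp h with h | h
      · exact absurd h hv
      · exact h
    rcases mul_eq_zero.mp e1 with h1 | h1
    · -- v = -1
      have hv1 : v = -1 := by linear_combination h1
      rcases mul_eq_zero.mp e2 with h2 | h2
      · have : u = -1 := by linear_combination h2
        right; right; simp [this, hv1]
      · exfalso
        apply hu
        rw [hv1] at h2
        linear_combination -h2
    · -- u^2 = 1 + v
      have hu2 : u^2 = 1 + v := by linear_combination h1
      rcases mul_eq_zero.mp e2 with h2 | h2
      · -- u = -1, then v = u^2 - 1 = 0 contradiction
        exfalso
        have : u = -1 := by linear_combination h2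
        apply hv
        rw [this] at hu2; linear_combination -hu2
      · have hv2 : v^2 = 1 + u := by linear_combination h2
        have hsum : (u - v) * (u + v + 1) = 0 := by linear_combination hu2 - hv2
        rcases mul_eq_zero.mp hsum with h3 | h3
        · have huv : u = v := by linear_combination h3
          have hq : u^2 - u - 1 = 0 := by rw [huv] at hu2 ⊢; linear_combination hu2
          rw [golden_fac] at hq
          rcases mul_eq_zero.mp hq with h4 | h4
          · left; have : u = goldenφ := by linear_combination h4
            simp [this, ← huv]
          · right; left; have : u = goldenψ := by linear_combination h4
            simp [this, ← huv]
        · exfalso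
          have : u * (u + 1) = 0 := by linear_combination hu2 + h3
          rcases mul_eq_zero.mp this with h4 | h4
          · exact hu h4
          · apply hv
            have hu1 : u = -1 := by linear_combination h4
            rw [hu1] at hu2; linear_combination -hu2
  · intro hmem
    simp only [Set.mem_insert_iff, Set.mem_singleton_iff, Prod.mk.injEq] at hmem
    rcases hmem with ⟨h1, h2⟩ | ⟨h1, h2⟩ | ⟨h1, h2⟩
    · subst h1; subst h2
      have hφ := phi_sq
      have hne := phi_ne
      have key : 1 * (1 + goldenφ⁻¹) + (1 + goldenφ + goldenφ) * (-(goldenφ^2)⁻¹) = 0 := by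
        field_simp
        linear_combination hφ
      constructor <;> rw [key, zero_mul]
    · subst h1; subst h2
      have hψ := psi_sq
      have hne := psi_ne
      have key : 1 * (1 + goldenψ⁻¹) + (1 + goldenψ + goldenψ) * (-(goldenψ^2)⁻¹) = 0 := by
        field_simp
        linear_combination hψ
      constructor <;> rw [key, zero_mul]
    · subst h1; subst h2
      norm_num
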